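/- For every non-negative integer s, the alternating quantifier depth of the first-order sentence KEIN_s on rooted, locally finite trees is exactly s; that is, KEIN_s is expressible by a first-order sentence whose nested quantifier sequences have at most s alternations between existential and universal quantifiers, but not by any first-order sentence whose nested quantifier sequences have at most s-1 such alternations. -/

import Mathlib

/-! ## Rooted trees -/

/-- A rooted tree structure: a vertex type, a root, and a parent map
(`parent v = none` is intended to hold exactly when `v` is the root). -/
structure RTree where
  V : Type
  root : V
  parent : V → Option V

namespace RTree

/-- Iterate the parent map `n` times. -/
def parentIter (T : RTree) : ℕ → T.V → Option T.V
  | 0, v => some v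
  | n + 1, v => (T.parent v).bind (T.parentIter n)

/-- `u` is a descendant of `v` (possibly `u = v`). -/
def IsDesc (T : RTree) (v u : T.V) : Prop :=
  ∃ n, T.parentIter n u = some v

/-- The structure is a genuine rooted, locally finite tree:
exactly the root has no parent, every vertex reaches the root by iterating
the parent map (connectivity and acyclicity), and every vertex has finitely
many children (local finiteness). -/
def IsTree (T : RTree) : Prop :=
  (∀ v, T.parent v = none ↔ v = T.root) ∧
  (∀ v, ∃ n, T.parentIter n v = some T.root) ∧
  (∀ v, {u | T.parent u = some v}.Finite)

open Classical in
/-- The subtree `T(v)` consisting of `v` and all its descendants, rooted at `v`. -/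
noncomputable def subtree (T : RTree) (v : T.V) : RTree where
  V := {u : T.V // T.IsDesc v u}
  root := ⟨v, 0, rfl⟩
  parent u :=
    if u.1 = v then none
    else (T.parent u.1).bind fun w =>
      if h : T.IsDesc v w then some ⟨w, h⟩ else none

end RTree

/-- An isomorphism of rooted trees: a bijection of vertices mapping root to
root and commuting with the parent maps. -/
structure TreeIso (S T : RTree) where
  toEquiv : S.V ≃ T.V
  map_root : toEquiv S.root = T.root
  map_parent : ∀ v, (S.parent v).map toEquiv = T.parent (toEquiv v)

/-! ## First-order logic of rooted trees -/

/-- Terms: variables (de Bruijn indices) and the constant `R` for the root. -/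
inductive FOTerm where
  | var : ℕ → FOTerm
  | root : FOTerm
deriving DecidableEq

/-- First-order formulas in the language of rooted trees: equality `x = y`,
the parent relation `parentOf t t'` (meaning `π(t') = t`, i.e. `t` is the
parent of `t'`), Boolean connectives, and quantifiers (de Bruijn style). -/
inductive FOFormula where
  | eq : FOTerm → FOTerm → FOFormula
  | parentOf : FOTerm → FOTerm → FOFormula
  | not : FOFormula → FOFormula
  | and : FOFormula → FOFormula → FOFormula
  | or : FOFormula → FOFormula → FOFormula
  | imp : FOFormula → FOFormula → FOFormula
  | all : FOFormula → FOFormula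
  | ex : FOFormula → FOFormula
deriving DecidableEq

namespace FOTerm

def eval (T : RTree) (env : ℕ → T.V) : FOTerm → T.V
  | var n => env n
  | root => T.root

def freeBound : FOTerm → ℕ
  | var n => n + 1
  | root => 0

end FOTerm

/-- Kinds of quantifiers, used to count alternations. -/
inductive QKind where
  | ex | all
deriving DecidableEq

/-- The dual of a quantifier kind. -/
def QKind.dual : QKind → QKind
  | .ex => .all
  | .all => .ex

namespace FOFormula

/-- Satisfaction of a formula in a rooted tree under an environment. -/
def Sat (T : RTree) : FOFormula → (ℕ → T.V) → Prop
  | eq t₁ t₂, env => t₁.eval T env = t₂.eval T env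
  | parentOf t₁ t₂, env => T.parent (t₂.eval T env) = some (t₁.eval T env)
  | not φ, env => ¬ φ.Sat T env
  | and φ ψ, env => φ.Sat T env ∧ ψ.Sat T env
  | or φ ψ, env => φ.Sat T env ∨ ψ.Sat T env
  | imp φ ψ, env => φ.Sat T env → ψ.Sat T env
  | all φ, env => ∀ w : T.V, φ.Sat T (fun n => match n with | 0 => w | Nat.succ k => env k)
  | ex φ, env => ∃ w : T.V, φ.Sat T (fun n => match n with | 0 => w | Nat.succ k => env k)

/-- Quantifier depth: the maximum number of nested quantifiers. -/
def qd : FOFormula → ℕ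
  | eq _ _ => 0
  | parentOf _ _ => 0
  | not φ => φ.qd
  | and φ ψ => max φ.qd ψ.qd
  | or φ ψ => max φ.qd ψ.qd
  | imp φ ψ => max φ.qd ψ.qd
  | all φ => φ.qd + 1
  | ex φ => φ.qd + 1

/-- Auxiliary alternation count: `aqdAux φ pol q` is the maximum number of
alternations between (effectively) existential and universal quantifiers along
a nested quantifier sequence of `φ`, given the current polarity `pol`
(`true` = positive; negations and antecedents of implications flip it, so that
e.g. a `∀` under a negation counts as an `∃`) and the effective kind `q` of
the innermost enclosing quantifier (if any). -/
def aqdAux : FOFormula → Bool → Option QKind → ℕ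
  | eq _ _, _, _ => 0
  | parentOf _ _, _, _ => 0
  | not φ, pol, q => φ.aqdAux (!pol) q
  | and φ ψ, pol, q => max (φ.aqdAux pol q) (ψ.aqdAux pol q)
  | or φ ψ, pol, q => max (φ.aqdAux pol q) (ψ.aqdAux pol q)
  | imp φ ψ, pol, q => max (φ.aqdAux (!pol) q) (ψ.aqdAux pol q)
  | all φ, pol, q =>
      (if q = some (if pol then QKind.ex else QKind.all) then 1 else 0) +
        φ.aqdAux pol (some (if pol then QKind.all else QKind.ex))
  | ex φ, pol, q =>
      (if q = some (if pol then QKind.all else QKind.ex) then 1 else 0) +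
        φ.aqdAux pol (some (if pol then QKind.ex else QKind.all))

/-- The number of alternations of quantifiers of a formula: the maximum number
of switches between (effectively) existential and universal quantifiers in a
nested quantifier sequence.  Purely existential or purely universal formulas
have `aqd = 0`. -/
def aqd (φ : FOFormula) : ℕ := φ.aqdAux true none

/-- A bound on the free variables of a formula: all free de Bruijn indices
are `< freeBound`. -/
def freeBound : FOFormula → ℕ
  | eq t₁ t₂ => max t₁.freeBound t₂.freeBound
  | parentOf t₁ t₂ => max t₁.freeBound t₂.freeBound
  | not φ => φ.freeBound
  | and φ ψ => max φ.freeBound ψ.freeBound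
  | or φ ψ => max φ.freeBound ψ.freeBound
  | imp φ ψ => max φ.freeBound ψ.freeBound
  | all φ => φ.freeBound - 1
  | ex φ => φ.freeBound - 1

/-- A sentence is a formula with no free variables. -/
def IsSentence (φ : FOFormula) : Prop := φ.freeBound = 0

end FOFormula

/-- A (closed) formula holds in a rooted tree. -/
def Models (T : RTree) (φ : FOFormula) : Prop :=
  φ.Sat T (fun _ => T.root)

/-- The formula `P_i(x)`, with free variable `x` being de Bruijn index `0`:
`P_0(x) = ∀ y ¬(π(y) = x)` and `P_{i+1}(x) = ∀ y (π(y) = x → ¬ P_i(y))`. -/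
def Pform : ℕ → FOFormula
  | 0 => .all (.not (.parentOf (.var 1) (.var 0)))
  | i + 1 => .all (.imp (.parentOf (.var 1) (.var 0)) (.not (Pform i)))

/-- The sentence `KEIN_i = P_i(R)`. -/
def KEIN : ℕ → FOFormula
  | 0 => .all (.not (.parentOf .root (.var 0)))
  | i + 1 => .all (.imp (.parentOf .root (.var 0)) (.not (Pform i)))

/-! ## Ehrenfeucht games -/

/-- The winning condition for Duplicator: for all pairs `(x_i, y_i)`, `(x_j, y_j)`
in the list of selected/designated pairs, (Main 1) `π(x_j) = x_i ↔ π(y_j) = y_i`,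
and (Main 2) `x_i = x_j ↔ y_i = y_j`. -/
def GoodPairs (T₁ T₂ : RTree) (ps : List (T₁.V × T₂.V)) : Prop :=
  ∀ p ∈ ps, ∀ q ∈ ps,
    (T₁.parent p.1 = some q.1 ↔ T₂.parent p.2 = some q.2) ∧
    (p.1 = q.1 ↔ p.2 = q.2)

/-- Duplicator wins the scheduled Ehrenfeucht game on `T₁, T₂` in which Spoiler
must play his moves in consecutive batches, the batch sizes given by the list
`sched`, switching trees after each batch; `side = true` means Spoiler currently
plays on `T₁` (Duplicator answering on `T₂`), `side = false` means Spoiler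
currently plays on `T₂`.  The list `ps` records the pairs selected so far
(including designated pairs and the pair of roots); Duplicator wins when the
final configuration satisfies `GoodPairs`. -/
def DupWinsSched (T₁ T₂ : RTree) : List ℕ → Bool → List (T₁.V × T₂.V) → Prop
  | [], _, ps => GoodPairs T₁ T₂ ps
  | 0 :: rest, side, ps => DupWinsSched T₁ T₂ rest (!side) ps
  | (n + 1) :: rest, side, ps =>
      if side then
        ∀ x : T₁.V, ∃ y : T₂.V, DupWinsSched T₁ T₂ (n :: rest) side ((x, y) :: ps)
      else
        ∀ y : T₂.V, ∃ x : T₁.V, DupWinsSched T₁ T₂ (n :: rest) side ((x, y) :: ps)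
termination_by sched _ _ => (sched.length, sched.sum)
decreasing_by
  all_goals
    first
      | exact Prod.Lex.left _ _ (Nat.lt_succ_self _)
      | exact Prod.Lex.right _ (by simp [List.sum_cons])

/-- The cost (in switches) for Spoiler of playing on side `side` when his
previous move (if any) was on side `last`. -/
def switchCost (last : Option Bool) (side : Bool) : ℕ :=
  match last with
  | none => 0
  | some b => if b = side then 0 else 1

/-- Duplicator wins the Ehrenfeucht game `EHR` with `rounds` remaining rounds,
`sw` remaining switches allowed to Spoiler, `last` the side on which Spoiler
made his previous move (if any), and `ps` the pairs selected so far.  In each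
round Spoiler picks a side (paying a switch if he changes trees, which he may
do only if he has switches left) and a vertex in that tree, and Duplicator
answers in the other tree. -/
def DupWinsEHRAux (T₁ T₂ : RTree) :
    ℕ → ℕ → Option Bool → List (T₁.V × T₂.V) → Prop
  | 0, _, _, ps => GoodPairs T₁ T₂ ps
  | r + 1, sw, last, ps =>
      ∀ side : Bool, switchCost last side ≤ sw →
        if side then
          ∀ x : T₁.V, ∃ y : T₂.V,
            DupWinsEHRAux T₁ T₂ r (sw - switchCost last side) (some side) ((x, y) :: ps)
        else
          ∀ y : T₂.V, ∃ x : T₁.V,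
            DupWinsEHRAux T₁ T₂ r (sw - switchCost last side) (some side) ((x, y) :: ps)

/-- Duplicator wins the game `EHR[T₁, T₂, s, r]`: `r` rounds, Spoiler may start
on either tree and make at most `s` switches. -/
def DupWinsEHR (T₁ T₂ : RTree) (s r : ℕ) : Prop :=
  DupWinsEHRAux T₁ T₂ r s none [(T₁.root, T₂.root)]

/-! ## The trees `T₁^{(s,k,m)}` and `T₂^{(s,k,m)}` -/

/-- The one-vertex rooted tree. -/
def single : RTree where
  V := PUnit
  root := PUnit.unit
  parent := fun _ => none

/-- Hang the trees `f 0, …, f (n-1)` from a new root: the root of each `f i`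
becomes a child of the new root. -/
def hang (n : ℕ) (f : Fin n → RTree) : RTree where
  V := Unit ⊕ (Σ i : Fin n, (f i).V)
  root := Sum.inl ()
  parent := fun x =>
    match x with
    | Sum.inl _ => none
    | Sum.inr ⟨i, w⟩ =>
      match (f i).parent w with
      | none => some (Sum.inl ())
      | some w' => some (Sum.inr ⟨i, w'⟩)

/-- The pair of trees `(T₁^{(s,k,m)}, T₂^{(s,k,m)})`, indexed by `s` (the
parameter `k` plays no role in the construction).  Conventions for `s = 0`:
`T₁^{(0)}` is a single vertex and `T₂^{(0)}` is a star of `m` childless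
children.  For `s ≥ 1`: in `T₁^{(s+1)}` the root has `m+1` children, from each
of which hangs a copy of `T₂^{(s)}`; in `T₂^{(s+1)}` the root has `m+1`
children, from `m` of which hangs a copy of `T₂^{(s)}` and from the remaining
one hangs a copy of `T₁^{(s)}`. -/
def TreePair (m : ℕ) : ℕ → RTree × RTree
  | 0 => (single, hang m fun _ => single)
  | s + 1 =>
      (hang (m + 1) fun _ => (TreePair m s).2,
       hang (m + 1) fun i => if i.1 = m then (TreePair m s).1 else (TreePair m s).2)

/-- The tree `T₁^{(s,k,m)}`. -/
def Tree1 (s k m : ℕ) : RTree := (TreePair m s).1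

/-- The tree `T₂^{(s,k,m)}`. -/
def Tree2 (s k m : ℕ) : RTree := (TreePair m s).2

-- scratch: part 1
section Part1
open FOFormula

lemma pform_freeBound (i : ℕ) : (Pform i).freeBound = 1 := by
  induction i with
  | zero => simp [Pform, FOFormula.freeBound, FOTerm.freeBound]
  | succ i ih => simp [Pform, FOFormula.freeBound, FOTerm.freeBound, ih]

lemma kein_isSentence (s : ℕ) : (KEIN s).IsSentence := by
  cases s with
  | zero => simp [KEIN, IsSentence, FOFormula.freeBound, FOTerm.freeBound]
  | succ s => simp [KEIN, IsSentence, FOFormula.freeBound, FOTerm.freeBound, pform_freeBound]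

lemma pform_aqdAux_le (i : ℕ) : ∀ pol q, (Pform i).aqdAux pol q ≤ i + 1 := by
  induction i with
  | zero =>
    intro pol q
    simp only [Pform, FOFormula.aqdAux]
    split <;> (split <;> simp)
  | succ i ih =>
    intro pol q
    have hc : ∀ q' : Option QKind, (if q = q' then 1 else 0) ≤ 1 := by
      intro q'; split <;> simp
    cases pol <;>
      simp only [Pform, FOFormula.aqdAux, Bool.not_true, Bool.not_false,
        Bool.false_eq_true, reduceIte, Nat.zero_max]
    · have := ih true (some QKind.ex)
      have h2 := hc (some QKind.all)
      omega
    · have := ih false (some QKind.all)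
      have h2 := hc (some QKind.ex)
      omega

lemma kein_aqd_le (s : ℕ) : (KEIN s).aqd ≤ s := by
  cases s with
  | zero => simp [KEIN, aqd, FOFormula.aqdAux]
  | succ s =>
    have h := pform_aqdAux_le s false (some QKind.all)
    have h2 : (if (none : Option QKind) = some QKind.ex then 1 else 0) = 0 := by simp
    simp only [KEIN, aqd, FOFormula.aqdAux, Bool.not_true, reduceIte, Nat.zero_max, h2]
    omega

/-! ## Part 2: path trees -/

/-- Node types: `(j, true)` is the tree `S1 j`, `(j, false)` is `S2 j`. -/
abbrev NT := ℕ × Bool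

/-- Child types in the recursive construction with branching `m+1`. -/
def childT (m : ℕ) (x : Fin (m+1)) : NT → Option NT
  | (0, true) => none
  | (0, false) => some (0, true)
  | (j+1, true) => some (j, false)
  | (j+1, false) => if x.val = m then some (j, true) else some (j, false)

/-- Type of the node reached by a (child-first) path from a root of type σ. -/
def typeAt (m : ℕ) (σ : NT) : List (Fin (m+1)) → Option NT
  | [] => some σ
  | x :: p => (typeAt m σ p).bind (childT m x)

lemma typeAt_cons_isSome {m σ} {x : Fin (m+1)} {p : List (Fin (m+1))}
    (h : (typeAt m σ (x :: p)).isSome) : (typeAt m σ p).isSome := by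
  simp only [typeAt] at h
  cases hp : typeAt m σ p with
  | none => rw [hp] at h; simp at h
  | some t => simp

/-- The tree of all valid paths from a root of type σ. -/
def PathTree (m : ℕ) (σ : NT) : RTree where
  V := { p : List (Fin (m+1)) // (typeAt m σ p).isSome }
  root := ⟨[], by simp [typeAt]⟩
  parent v :=
    match v with
    | ⟨[], _⟩ => none
    | ⟨_ :: p, h⟩ => some ⟨p, typeAt_cons_isSome h⟩

lemma pathTree_parent_eq_some {m σ} (u v : (PathTree m σ).V) :
    (PathTree m σ).parent u = some v ↔ ∃ x, u.1 = x :: v.1 := by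
  obtain ⟨ul, hu⟩ := u
  cases ul with
  | nil => simp [PathTree]
  | cons x p =>
    show some (⟨p, _⟩ : (PathTree m σ).V) = some v ↔ _
    constructor
    · intro h
      have hp : p = v.1 := congrArg Subtype.val (Option.some_inj.mp h)
      exact ⟨x, by show x :: p = x :: v.1; rw [hp]⟩
    · rintro ⟨y, hy⟩
      have h2 : p = v.1 := by
        have hy' : x :: p = y :: v.1 := hy
        exact (List.cons_eq_cons.mp hy').2
      exact congrArg some (Subtype.ext h2)

lemma pathTree_isTree (m : ℕ) (σ : NT) : (PathTree m σ).IsTree := by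
  refine ⟨?_, ?_, ?_⟩
  · rintro ⟨ul, hu⟩
    cases ul with
    | nil => exact ⟨fun _ => Subtype.ext rfl, fun _ => rfl⟩
    | cons x p =>
      constructor
      · intro h
        exact absurd h (by exact fun hh => Option.some_ne_none _ hh)
      · intro h
        have h2 : x :: p = [] := congrArg Subtype.val h
        simp at h2
  · rintro ⟨ul, hu⟩
    induction ul with
    | nil =>
      exact ⟨0, by simp [RTree.parentIter]; rfl⟩
    | cons x p ih =>
      obtain ⟨n, hn⟩ := ih (typeAt_cons_isSome hu)
      exact ⟨n + 1, by simpa [RTree.parentIter, PathTree] using hn⟩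
  · intro v
    have : {u | (PathTree m σ).parent u = some v} ⊆
        (fun x : Fin (m+1) => if h : (typeAt m σ (x :: v.1)).isSome then
            (⟨x :: v.1, h⟩ : (PathTree m σ).V) else v) '' Set.univ := by
      intro u hu
      obtain ⟨x, hx⟩ := (pathTree_parent_eq_some u v).1 hu
      refine ⟨x, Set.mem_univ x, ?_⟩
      have hs : (typeAt m σ (x :: v.1)).isSome := hx ▸ u.2
      show dite _ _ _ = u
      refine (dif_pos hs).trans ?_
      exact Subtype.ext hx.symm
    exact Set.Finite.subset (Set.finite_univ.image _) this

/-! ## Semantics of KEIN on trees -/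

/-- Semantic counterpart of `Pform`. -/
def SemP (T : RTree) : ℕ → T.V → Prop
  | 0, v => ∀ u, T.parent u ≠ some v
  | i+1, v => ∀ u, T.parent u = some v → ¬ SemP T i u

lemma sat_pform (i : ℕ) (T : RTree) (env : ℕ → T.V) :
    (Pform i).Sat T env ↔ SemP T i (env 0) := by
  induction i generalizing env with
  | zero =>
    simp only [Pform, FOFormula.Sat, SemP, FOTerm.eval]
  | succ i ih =>
    simp only [Pform, FOFormula.Sat, SemP, FOTerm.eval]
    refine forall_congr' fun u => imp_congr Iff.rfl (not_congr ?_)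
    exact ih _

lemma models_kein (i : ℕ) (T : RTree) :
    Models T (KEIN i) ↔ SemP T i T.root := by
  cases i with
  | zero =>
    simp only [Models, KEIN, FOFormula.Sat, FOTerm.eval, SemP]
  | succ i =>
    simp only [Models, KEIN, FOFormula.Sat, FOTerm.eval, SemP]
    refine forall_congr' fun u => imp_congr Iff.rfl (not_congr ?_)
    exact sat_pform i T _

/-- The truth value of `SemP i` at a node, as a function of its type. -/
def gg : ℕ → NT → Prop
  | 0, t => t = (0, true)
  | i+1, (0, true) => True
  | i+1, (0, false) => ¬ gg i (0, true)
  | i+1, (j+1, true) => ¬ gg i (j, false)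
  | i+1, (j+1, false) => ¬ gg i (j, true) ∧ ¬ gg i (j, false)

lemma gg_main (s : ℕ) : gg s (s, true) ∧ ¬ gg s (s, false) := by
  induction s with
  | zero => simp [gg]
  | succ s ih =>
    refine ⟨?_, ?_⟩
    · show ¬ gg s (s, false); exact ih.2
    · show ¬ (¬ gg s (s, true) ∧ ¬ gg s (s, false))
      intro h; exact h.1 ih.1

/-- type of a vertex of a path tree. -/
def vty {m σ} (v : (PathTree m σ).V) : NT := (typeAt m σ v.1).get v.2

lemma vty_root (m : ℕ) (σ : NT) : vty (PathTree m σ).root = σ := rfl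

lemma vty_cons {m σ} (u v : (PathTree m σ).V) (x : Fin (m+1)) (h : u.1 = x :: v.1) :
    childT m x (vty v) = some (vty u) := by
  have h2 := u.2
  rw [h] at h2
  have h3 : typeAt m σ u.1 = (typeAt m σ v.1).bind (childT m x) := by rw [h]; rfl
  rw [Option.eq_some_of_isSome u.2, Option.eq_some_of_isSome v.2] at h3
  exact h3.symm

lemma childT_eq_of_nonm {m : ℕ} {x : Fin (m+1)} (j : ℕ) (hx : x.val ≠ m) :
    childT m x (j+1, false) = some (j, false) := by
  simp [childT, hx]

lemma childT_eq_of_m {m : ℕ} {x : Fin (m+1)} (j : ℕ) (hx : x.val = m) :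
    childT m x (j+1, false) = some (j, true) := by
  simp [childT, hx]

/-- exists a child of given index in the path tree. -/
lemma pathTree_child_exists {m σ} (v : (PathTree m σ).V) (x : Fin (m+1)) (t : NT)
    (ht : childT m x (vty v) = some t) :
    ∃ u : (PathTree m σ).V, u.1 = x :: v.1 ∧ vty u = t := by
  have hs : (typeAt m σ (x :: v.1)).isSome := by
    simp only [typeAt]
    rw [Option.eq_some_of_isSome v.2]
    simp only [Option.bind_some]
    rw [show (typeAt m σ v.1).get v.2 = vty v from rfl] at *
    rw [ht]; rfl
  refine ⟨⟨x :: v.1, hs⟩, rfl, ?_⟩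
  have := vty_cons ⟨x :: v.1, hs⟩ v x rfl
  rw [ht] at this
  exact (Option.some_inj.mp this).symm

lemma semP_iff_gg {m σ} (hm : 1 ≤ m) (i : ℕ) (v : (PathTree m σ).V) :
    SemP (PathTree m σ) i v ↔ gg i (vty v) := by
  induction i generalizing v with
  | zero =>
    simp only [SemP, gg]
    constructor
    · intro h
      by_contra hne
      -- v has a child
      obtain ⟨t, ht⟩ : ∃ t, childT m (⟨0, by omega⟩ : Fin (m+1)) (vty v) = some t := by
        rcases hv : vty v with ⟨j, b⟩
        cases j with
        | zero =>
          cases b with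
          | true => exact absurd hv hne
          | false => exact ⟨(0, true), rfl⟩
        | succ j =>
          cases b with
          | true => exact ⟨(j, false), rfl⟩
          | false =>
            refine ⟨(j, false), ?_⟩
            simp only [childT]
            rw [if_neg (by omega)]
      obtain ⟨u, hu, _⟩ := pathTree_child_exists v _ _ ht
      exact h u ((pathTree_parent_eq_some u v).2 ⟨_, hu⟩)
    · intro h u hp
      obtain ⟨x, hx⟩ := (pathTree_parent_eq_some u v).1 hp
      have := vty_cons u v x hx
      rw [show vty v = (0, true) from h] at this
      simp [childT] at this
  | succ i ih =>
    simp only [SemP]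
    constructor
    · intro h
      rcases hv : vty v with ⟨j, b⟩
      cases j with
      | zero =>
        cases b with
        | true => trivial
        | false =>
          show ¬ gg i (0, true)
          obtain ⟨u, hu, hut⟩ := pathTree_child_exists v (⟨0, by omega⟩ : Fin (m+1)) (0, true)
            (by rw [hv]; rfl)
          have := h u ((pathTree_parent_eq_some u v).2 ⟨_, hu⟩)
          rw [ih u, hut] at this
          exact this
      | succ j =>
        cases b with
        | true =>
          show ¬ gg i (j, false)
          obtain ⟨u, hu, hut⟩ := pathTree_child_exists v (⟨0, by omega⟩ : Fin (m+1)) (j, false)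
            (by rw [hv]; rfl)
          have := h u ((pathTree_parent_eq_some u v).2 ⟨_, hu⟩)
          rw [ih u, hut] at this
          exact this
        | false =>
          show ¬ gg i (j, true) ∧ ¬ gg i (j, false)
          constructor
          · obtain ⟨u, hu, hut⟩ := pathTree_child_exists v (⟨m, by omega⟩ : Fin (m+1)) (j, true)
              (by rw [hv]; exact childT_eq_of_m j rfl)
            have := h u ((pathTree_parent_eq_some u v).2 ⟨_, hu⟩)
            rw [ih u, hut] at this
            exact this
          · obtain ⟨u, hu, hut⟩ := pathTree_child_exists v (⟨0, by omega⟩ : Fin (m+1)) (j, false)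
              (by rw [hv]; exact childT_eq_of_nonm j (by simp; omega))
            have := h u ((pathTree_parent_eq_some u v).2 ⟨_, hu⟩)
            rw [ih u, hut] at this
            exact this
    · intro h u hp
      obtain ⟨x, hx⟩ := (pathTree_parent_eq_some u v).1 hp
      have hct := vty_cons u v x hx
      rw [ih u]
      rcases hv : vty v with ⟨j, b⟩
      rw [hv] at hct h
      cases j with
      | zero =>
        cases b with
        | true => simp [childT] at hct
        | false =>
          have : vty u = (0, true) := by
            simp only [childT] at hct
            exact (Option.some_inj.mp hct).symm
          rw [this]; exact h
      | succ j =>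
        cases b with
        | true =>
          have : vty u = (j, false) := by
            simp only [childT] at hct
            exact (Option.some_inj.mp hct).symm
          rw [this]; exact h
        | false =>
          by_cases hxm : x.val = m
          · rw [childT_eq_of_m j hxm] at hct
            rw [← Option.some_inj.mp hct]
            exact h.1
          · rw [childT_eq_of_nonm j hxm] at hct
            rw [← Option.some_inj.mp hct]
            exact h.2

lemma models_kein_true (s m : ℕ) (hm : 1 ≤ m) :
    Models (PathTree m (s, true)) (KEIN s) := by
  rw [models_kein, semP_iff_gg hm, vty_root]
  exact (gg_main s).1

lemma not_models_kein_false (s m : ℕ) (hm : 1 ≤ m) :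
    ¬ Models (PathTree m (s, false)) (KEIN s) := by
  rw [models_kein, semP_iff_gg hm, vty_root]
  exact (gg_main s).2

/-! ## The Duplicator invariant -/

/-- Type compatibility of a matched pair, given remaining switches and the side
of Spoiler's last move. -/
def TCpair (sw : ℕ) (last : Option Bool) (ta tb : NT) : Prop :=
  ta = tb ∨
  (ta.1 = tb.1 ∧ ta.2 = true ∧ tb.2 = false ∧ sw + 1 ≤ ta.1 + switchCost last false) ∨
  (ta.1 = tb.1 ∧ ta.2 = false ∧ tb.2 = true ∧ sw + 1 ≤ ta.1 + switchCost last true)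

/-- Duplicator's invariant: `L` is the list of matched raw path pairs. -/
structure DupInv (s m : ℕ) (L : List (List (Fin (m+1)) × List (Fin (m+1))))
    (sw : ℕ) (last : Option Bool) : Prop where
  root_mem : ([], []) ∈ L
  valid : ∀ ab ∈ L, (typeAt m (s,true) ab.1).isSome ∧ (typeAt m (s,false) ab.2).isSome
  len : ∀ ab ∈ L, ab.1.length = ab.2.length
  bij : ∀ ab ∈ L, ∀ cd ∈ L, (ab.1 = cd.1 ↔ ab.2 = cd.2)
  closure : ∀ ab ∈ L, ∀ x p, ab.1 = x :: p → ∃ y q, ab.2 = y :: q ∧ (p, q) ∈ L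
  types : ∀ ab ∈ L, ∀ ta tb, typeAt m (s,true) ab.1 = some ta →
    typeAt m (s,false) ab.2 = some tb → TCpair sw last ta tb
  consis : ∀ x p y q, (x :: p, y :: q) ∈ L → (p, q) ∈ L →
    ∀ t, typeAt m (s,true) p = some t → typeAt m (s,false) q = some t →
      childT m x t = childT m y t

lemma anchor_arith (last : Option Bool) (c b : Bool) (sw j : ℕ)
    (h : sw + 1 ≤ j + switchCost last b) (hk : switchCost last c ≤ sw) :
    sw - switchCost last c + 1 ≤ j + switchCost (some c) b := by
  rcases last with _ | d
  · cases c <;> cases b <;> simp_all [switchCost] <;> omega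
  · cases d <;> cases c <;> cases b <;> simp_all [switchCost] <;> omega

lemma switchCost_le_one (last : Option Bool) (c : Bool) : switchCost last c ≤ 1 := by
  rcases last with _ | b
  · simp [switchCost]
  · simp only [switchCost]; split <;> simp

/-- Re-anchoring: after Spoiler chooses side `c` (paying the cost), every
previously matched pair is still type-compatible. -/
lemma DupInv.reAnchor {s m L sw last} (h : DupInv s m L sw last) (c : Bool)
    (hk : switchCost last c ≤ sw) : DupInv s m L (sw - switchCost last c) (some c) := by
  refine ⟨h.root_mem, h.valid, h.len, h.bij, h.closure, ?_, h.consis⟩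
  intro ab hab ta tb h1 h2
  rcases h.types ab hab ta tb h1 h2 with heq | hmis | hmis
  · exact Or.inl heq
  · exact Or.inr (Or.inl ⟨hmis.1, hmis.2.1, hmis.2.2.1,
      anchor_arith last c false sw ta.1 hmis.2.2.2 hk⟩)
  · exact Or.inr (Or.inr ⟨hmis.1, hmis.2.1, hmis.2.2.1,
      anchor_arith last c true sw ta.1 hmis.2.2.2 hk⟩)

/-- Pigeonhole: a fresh non-special index exists. -/
lemma exists_fresh {m : ℕ} (bad : Finset (Fin (m+1))) (hcard : bad.card < m) :
    ∃ y : Fin (m+1), y.val ≠ m ∧ y ∉ bad := by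
  by_contra hno
  push_neg at hno
  have hsub : (Finset.univ.filter (fun y : Fin (m+1) => y.val ≠ m)) ⊆ bad := by
    intro y hy
    simp only [Finset.mem_filter] at hy
    exact hno y hy.2
  have hcard2 : (Finset.univ.filter (fun y : Fin (m+1) => y.val ≠ m)).card = m := by
    have : (Finset.univ.filter (fun y : Fin (m+1) => y.val ≠ m)) =
        Finset.univ.erase (Fin.last m) := by
      ext y
      simp only [Finset.mem_filter, Finset.mem_univ, Finset.mem_erase, true_and, and_true]
      constructor
      · intro hy hy2; exact hy (by rw [hy2]; rfl)
      · intro hy hy2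
        exact hy (Fin.ext hy2)
    rw [this, Finset.card_erase_of_mem (Finset.mem_univ _)]
    simp
  have := Finset.card_le_card hsub
  omega

/-- The set of indices already used as a child of `q` on side 2. -/
def bad2 {m : ℕ} (L : List (List (Fin (m+1)) × List (Fin (m+1))))
    (q : List (Fin (m+1))) : Finset (Fin (m+1)) :=
  (L.filterMap (fun ab => match ab.2 with
    | [] => none
    | y :: q' => if q' = q then some y else none)).toFinset

lemma bad2_card {m L} {q : List (Fin (m+1))} : (bad2 L q).card ≤ L.length :=
  le_trans (List.toFinset_card_le _) (List.length_filterMap_le _ _)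

lemma not_mem_bad2 {m L} {q : List (Fin (m+1))} {y : Fin (m+1)} (h : y ∉ bad2 L q) :
    ∀ ab ∈ L, ab.2 ≠ y :: q := by
  intro ab hab heq
  apply h
  simp only [bad2, List.mem_toFinset, List.mem_filterMap]
  exact ⟨ab, hab, by rw [heq]; simp⟩

def bad1 {m : ℕ} (L : List (List (Fin (m+1)) × List (Fin (m+1))))
    (p : List (Fin (m+1))) : Finset (Fin (m+1)) :=
  (L.filterMap (fun ab => match ab.1 with
    | [] => none
    | x :: p' => if p' = p then some x else none)).toFinset

lemma bad1_card {m L} {p : List (Fin (m+1))} : (bad1 L p).card ≤ L.length :=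
  le_trans (List.toFinset_card_le _) (List.length_filterMap_le _ _)

lemma not_mem_bad1 {m L} {p : List (Fin (m+1))} {x : Fin (m+1)} (h : x ∉ bad1 L p) :
    ∀ ab ∈ L, ab.1 ≠ x :: p := by
  intro ab hab heq
  apply h
  simp only [bad1, List.mem_toFinset, List.mem_filterMap]
  exact ⟨ab, hab, by rw [heq]; simp⟩

/-! ## Extending the matching by one vertex -/

/-- Symmetric closure, derived. -/
lemma DupInv.closure2 {s m L sw last} (h : DupInv s m L sw last) :
    ∀ ab ∈ L, ∀ y q, ab.2 = y :: q → ∃ x p, ab.1 = x :: p ∧ (p, q) ∈ L := by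
  rintro ⟨a, b⟩ hab y q h2
  simp only at h2
  subst h2
  have hlen := h.len _ hab
  simp only [List.length_cons] at hlen
  rcases a with _ | ⟨x, p⟩
  · simp at hlen
  · obtain ⟨w, w', hw, hmem⟩ := h.closure _ hab x p rfl
    simp only at hw
    obtain ⟨rfl, rfl⟩ : y = w ∧ q = w' := List.cons_eq_cons.mp hw
    exact ⟨x, p, rfl, hmem⟩

/-- Generic assembly of the extended invariant. -/
lemma extend_assemble {s m : ℕ} {L : List (List (Fin (m+1)) × List (Fin (m+1)))}
    {sw : ℕ} {last : Option Bool} {p q : List (Fin (m+1))} {x y : Fin (m+1)}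
    {ta tb tc tcy : NT}
    (hInv : DupInv s m L sw last)
    (hmem : (p, q) ∈ L)
    (hta : typeAt m (s,true) p = some ta) (htb : typeAt m (s,false) q = some tb)
    (htc : childT m x ta = some tc) (hcy : childT m y tb = some tcy)
    (hnew : ∀ ab ∈ L, ab.1 ≠ x :: p) (hfresh : ∀ ab ∈ L, ab.2 ≠ y :: q)
    (hTC : TCpair sw last tc tcy)
    (hcons : ta = tb → childT m x ta = childT m y tb) :
    DupInv s m ((x :: p, y :: q) :: L) sw last := by
  have hvx : typeAt m (s,true) (x :: p) = some tc := by
    simp only [typeAt, hta, Option.bind_some]; exact htc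
  have hvy : typeAt m (s,false) (y :: q) = some tcy := by
    simp only [typeAt, htb, Option.bind_some]; exact hcy
  refine ⟨List.mem_cons_of_mem _ hInv.root_mem, ?_, ?_, ?_, ?_, ?_, ?_⟩
  · intro ab hab
    rcases List.mem_cons.mp hab with rfl | hab
    · exact ⟨by rw [hvx]; rfl, by rw [hvy]; rfl⟩
    · exact hInv.valid ab hab
  · intro ab hab
    rcases List.mem_cons.mp hab with rfl | hab
    · simp only [List.length_cons]
      rw [hInv.len (p, q) hmem]
    · exact hInv.len ab hab
  · intro ab hab cd hcd
    rcases List.mem_cons.mp hab with rfl | hab <;> rcases List.mem_cons.mp hcd with rfl | hcd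
    · simp
    · exact iff_of_false (fun h => hnew cd hcd h.symm) (fun h => hfresh cd hcd h.symm)
    · exact iff_of_false (fun h => hnew ab hab h) (fun h => hfresh ab hab h)
    · exact hInv.bij ab hab cd hcd
  · intro ab hab x' p' h1
    rcases List.mem_cons.mp hab with rfl | hab
    · obtain ⟨rfl, rfl⟩ : x' = x ∧ p' = p := by
        have := List.cons_eq_cons.mp h1.symm
        exact ⟨this.1, this.2⟩
      exact ⟨y, q, rfl, List.mem_cons_of_mem _ hmem⟩
    · obtain ⟨w, w', hw, hm⟩ := hInv.closure ab hab x' p' h1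
      exact ⟨w, w', hw, List.mem_cons_of_mem _ hm⟩
  · intro ab hab ta' tb' h1 h2
    rcases List.mem_cons.mp hab with rfl | hab
    · simp only at h1 h2
      rw [hvx] at h1; rw [hvy] at h2
      rw [← Option.some_inj.mp h1, ← Option.some_inj.mp h2]
      exact hTC
    · exact hInv.types ab hab ta' tb' h1 h2
  · intro x' p' y' q' hmem1 hmem2 t h1 h2
    rcases List.mem_cons.mp hmem1 with heq1 | hmem1
    · -- the new pair as child
      obtain ⟨rfl, rfl, rfl, rfl⟩ : x' = x ∧ p' = p ∧ y' = y ∧ q' = q := by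
        have e1 := congrArg Prod.fst heq1
        have e2 := congrArg Prod.snd heq1
        simp only at e1 e2
        exact ⟨(List.cons_eq_cons.mp e1).1, (List.cons_eq_cons.mp e1).2,
          (List.cons_eq_cons.mp e2).1, (List.cons_eq_cons.mp e2).2⟩
      have hte : ta = t := Option.some_inj.mp (hta.symm.trans h1)
      have hte2 : tb = t := Option.some_inj.mp (htb.symm.trans h2)
      have hxy := hcons (hte.trans hte2.symm)
      rw [hte] at hxy
      rw [hte2] at hxy
      first
        | exact hxy
        | (rw [hte]; exact hxy)
    · rcases List.mem_cons.mp hmem2 with heq2 | hmem2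
      · -- old child, new parent: impossible
        exfalso
        have e1 : p' = x :: p := by
          have := congrArg Prod.fst heq2; simpa using this
        obtain ⟨w, w', hw, hm⟩ := hInv.closure _ hmem1 x' p' rfl
        rw [e1] at hm
        exact hnew _ hm rfl
      · exact hInv.consis x' p' y' q' hmem1 hmem2 t h1 h2

/-- Choice of Duplicator's answer when Spoiler extends on side 1. -/
lemma choose_y {s m : ℕ} {L : List (List (Fin (m+1)) × List (Fin (m+1)))}
    {sw : ℕ} {p q : List (Fin (m+1))} {x : Fin (m+1)} {ta tb tc : NT}
    (hInv : DupInv s m L sw (some true))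
    (hmem : (p, q) ∈ L)
    (hta : typeAt m (s,true) p = some ta) (htb : typeAt m (s,false) q = some tb)
    (htc : childT m x ta = some tc)
    (hnew : ∀ ab ∈ L, ab.1 ≠ x :: p)
    (hlen : L.length < m) :
    ∃ y tcy, childT m y tb = some tcy ∧ (∀ ab ∈ L, ab.2 ≠ y :: q) ∧
      TCpair sw (some true) tc tcy ∧ (ta = tb → childT m x ta = childT m y tb) := by
  have hbad : (bad2 L q).card < m := lt_of_le_of_lt bad2_card hlen
  obtain ⟨y0, hy0m, hy0⟩ := exists_fresh _ hbad
  have hfresh0 := not_mem_bad2 hy0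
  rcases hInv.types (p, q) hmem ta tb hta htb with heq | hmis | hmis
  · -- equal types
    subst heq
    rcases hta' : ta with ⟨j, bb⟩
    rw [hta'] at htc
    cases j with
    | zero =>
      cases bb with
      | true => simp [childT] at htc
      | false =>
        refine ⟨y0, (0, true), rfl, hfresh0, ?_, fun _ => rfl⟩
        rw [← Option.some_inj.mp htc]
        exact Or.inl rfl
    | succ j =>
      cases bb with
      | true =>
        refine ⟨y0, (j, false), rfl, hfresh0, ?_, fun _ => rfl⟩
        rw [← Option.some_inj.mp htc]
        exact Or.inl rfl
      | false =>
        by_cases hxm : x.val = m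
        · -- special child: answer with the special index, which is fresh
          refine ⟨x, (j, true), childT_eq_of_m j hxm, ?_, ?_, fun _ => rfl⟩
          · -- freshness of the special index on side 2
            intro ab hab heq2
            obtain ⟨z, u', hab1, hm⟩ := hInv.closure2 ab hab x q heq2
            have : u' = p := by
              have := (hInv.bij (u', q) hm (p, q) hmem).mpr rfl
              simpa using this
            subst this
            have hcc := hInv.consis z u' x q (by rw [← hab1, ← heq2]; exact hab) hm
              ta (by rw [hta']; exact (hta' ▸ hta)) (by rw [hta']; exact (hta' ▸ htb))
            rw [hta', childT_eq_of_m j hxm] at hcc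
            have hzm : z.val = m := by
              by_contra hzm
              rw [childT_eq_of_nonm j hzm] at hcc
              simp at hcc
            have hzx : z = x := Fin.ext (by rw [hzm, hxm])
            exact hnew ab hab (by rw [hab1, hzx])
          · rw [childT_eq_of_m j hxm] at htc
            rw [← Option.some_inj.mp htc]
            exact Or.inl rfl
        · refine ⟨y0, (j, false), childT_eq_of_nonm j (by omega), hfresh0, ?_, ?_⟩
          · rw [childT_eq_of_nonm j hxm] at htc
            rw [← Option.some_inj.mp htc]
            exact Or.inl rfl
          · intro _
            rw [childT_eq_of_nonm j hxm, childT_eq_of_nonm j (by omega)]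
  · -- ta thin on side 1, tb fat on side 2 : Spoiler on thin side
    obtain ⟨hj, h2, h3, _⟩ := hmis
    rcases hta' : ta with ⟨j, bb⟩
    rw [hta'] at htc h2 hj
    simp only at h2 hj
    subst h2
    cases j with
    | zero => simp [childT] at htc
    | succ j =>
      have htb' : tb = (j+1, false) := by
        rcases tb with ⟨jb, bb'⟩
        simp only at hj h3
        rw [← hj, h3]
      refine ⟨y0, (j, false), by rw [htb']; exact childT_eq_of_nonm j (by omega),
        hfresh0, ?_, ?_⟩
      · simp only [childT] at htc
        rw [← Option.some_inj.mp htc]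
        exact Or.inl rfl
      · intro hcontra
        exact absurd (hcontra.trans htb') (by simp)
  · -- ta fat on side 1, tb thin on side 2 : Spoiler on fat side
    obtain ⟨hj, h2, h3, hsw⟩ := hmis
    rcases hta' : ta with ⟨j, bb⟩
    rw [hta'] at htc h2 hj hsw
    simp only at h2 hj hsw
    subst h2
    have hcost : switchCost (some true) true = 0 := by simp [switchCost]
    rw [hcost] at hsw
    cases j with
    | zero => omega
    | succ j =>
      have htb' : tb = (j+1, true) := by
        rcases tb with ⟨jb, bb'⟩
        simp only at hj h3
        rw [← hj, h3]
      by_cases hxm : x.val = m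
      · refine ⟨y0, (j, false), by rw [htb']; rfl, hfresh0, ?_, ?_⟩
        · rw [childT_eq_of_m j hxm] at htc
          rw [← Option.some_inj.mp htc]
          refine Or.inr (Or.inl ⟨rfl, rfl, rfl, ?_⟩)
          have : switchCost (some true) false = 1 := by simp [switchCost]
          omega
        · intro hcontra
          exact absurd (hcontra.trans htb') (by simp)
      · refine ⟨y0, (j, false), by rw [htb']; rfl, hfresh0, ?_, ?_⟩
        · rw [childT_eq_of_nonm j hxm] at htc
          rw [← Option.some_inj.mp htc]
          exact Or.inl rfl
        · intro hcontra
          exact absurd (hcontra.trans htb') (by simp)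

/-- Choice of Duplicator's answer when Spoiler extends on side 2. -/
lemma choose_x {s m : ℕ} {L : List (List (Fin (m+1)) × List (Fin (m+1)))}
    {sw : ℕ} {p q : List (Fin (m+1))} {y : Fin (m+1)} {ta tb tcy : NT}
    (hInv : DupInv s m L sw (some false))
    (hmem : (p, q) ∈ L)
    (hta : typeAt m (s,true) p = some ta) (htb : typeAt m (s,false) q = some tb)
    (hcy : childT m y tb = some tcy)
    (hnew : ∀ ab ∈ L, ab.2 ≠ y :: q)
    (hlen : L.length < m) :
    ∃ x tc, childT m x ta = some tc ∧ (∀ ab ∈ L, ab.1 ≠ x :: p) ∧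
      TCpair sw (some false) tc tcy ∧ (ta = tb → childT m x ta = childT m y tb) := by
  have hbad : (bad1 L p).card < m := lt_of_le_of_lt bad1_card hlen
  obtain ⟨x0, hx0m, hx0⟩ := exists_fresh _ hbad
  have hfresh0 := not_mem_bad1 hx0
  obtain ⟨ja, ba⟩ := ta
  obtain ⟨jb, bb⟩ := tb
  rcases hInv.types (p, q) hmem _ _ hta htb with heq | hmis | hmis
  · -- equal types
    obtain ⟨rfl, rfl⟩ : ja = jb ∧ ba = bb :=
      ⟨congrArg Prod.fst heq, congrArg Prod.snd heq⟩
    cases ja with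
    | zero =>
      cases ba with
      | true => simp [childT] at hcy
      | false =>
        refine ⟨x0, (0, true), rfl, hfresh0, ?_, fun _ => rfl⟩
        rw [← Option.some_inj.mp hcy]
        exact Or.inl rfl
    | succ j =>
      cases ba with
      | true =>
        refine ⟨x0, (j, false), rfl, hfresh0, ?_, fun _ => rfl⟩
        rw [← Option.some_inj.mp hcy]
        exact Or.inl rfl
      | false =>
        by_cases hym : y.val = m
        · refine ⟨y, (j, true), childT_eq_of_m j hym, ?_, ?_, fun _ => rfl⟩
          · -- freshness of the special index on side 1
            rintro ⟨a1, a2⟩ hab heq2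
            simp only at heq2
            subst heq2
            obtain ⟨w, w', hw, hm⟩ := hInv.closure _ hab y p rfl
            simp only at hw
            subst hw
            have hwq : w' = q := by
              have := (hInv.bij (p, w') hm (p, q) hmem).mp rfl
              simpa using this
            have hab2 : (y :: p, w :: q) ∈ L := by rw [← hwq]; exact hab
            have hm2 : (p, q) ∈ L := by rw [← hwq]; exact hm
            have hcc := hInv.consis y p w q hab2 hm2 (j+1, false) hta htb
            rw [childT_eq_of_m j hym] at hcc
            have hwm : w.val = m := by
              by_contra hwm
              rw [childT_eq_of_nonm j hwm] at hcc
              simp at hcc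
            have hwy : w = y := Fin.ext (by rw [hwm, hym])
            exact hnew _ hab2 (by rw [hwy])
          · rw [childT_eq_of_m j hym] at hcy
            rw [← Option.some_inj.mp hcy]
            exact Or.inl rfl
        · refine ⟨x0, (j, false), childT_eq_of_nonm j (by omega), hfresh0, ?_, ?_⟩
          · rw [childT_eq_of_nonm j hym] at hcy
            rw [← Option.some_inj.mp hcy]
            exact Or.inl rfl
          · intro _
            rw [childT_eq_of_nonm j (by omega : (x0:ℕ) ≠ m), childT_eq_of_nonm j hym]
  · -- side 1 thin, side 2 fat : Spoiler on the fat side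
    obtain ⟨hj, h2, h3, hsw⟩ := hmis
    simp only at hj h2 h3 hsw
    subst h2
    subst h3
    subst hj
    have hcost : switchCost (some false) false = 0 := by simp [switchCost]
    rw [hcost] at hsw
    cases ja with
    | zero => omega
    | succ j =>
      by_cases hym : y.val = m
      · refine ⟨x0, (j, false), rfl, hfresh0, ?_, ?_⟩
        · rw [childT_eq_of_m j hym] at hcy
          rw [← Option.some_inj.mp hcy]
          refine Or.inr (Or.inr ⟨rfl, rfl, rfl, ?_⟩)
          have : switchCost (some false) true = 1 := by simp [switchCost]
          omega
        · intro hcontra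
          simp at hcontra
      · refine ⟨x0, (j, false), rfl, hfresh0, ?_, ?_⟩
        · rw [childT_eq_of_nonm j hym] at hcy
          rw [← Option.some_inj.mp hcy]
          exact Or.inl rfl
        · intro hcontra
          simp at hcontra
  · -- side 1 fat, side 2 thin : Spoiler on the thin side
    obtain ⟨hj, h2, h3, _⟩ := hmis
    simp only at hj h2 h3
    subst h2
    subst h3
    subst hj
    cases ja with
    | zero => simp [childT] at hcy
    | succ j =>
      refine ⟨x0, (j, false), childT_eq_of_nonm j (by omega), hfresh0, ?_, ?_⟩
      · simp only [childT] at hcy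
        rw [← Option.some_inj.mp hcy]
        exact Or.inl rfl
      · intro hcontra
        simp at hcontra

/-- One-step extension, Spoiler on side 1. -/
lemma extendOne_true {s m : ℕ} {L : List (List (Fin (m+1)) × List (Fin (m+1)))}
    {sw : ℕ} {p q : List (Fin (m+1))} {x : Fin (m+1)}
    (hInv : DupInv s m L sw (some true))
    (hmem : (p, q) ∈ L)
    (hv : (typeAt m (s,true) (x :: p)).isSome)
    (hnew : ∀ ab ∈ L, ab.1 ≠ x :: p)
    (hlen : L.length < m) :
    ∃ y, DupInv s m ((x :: p, y :: q) :: L) sw (some true) := by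
  obtain ⟨ta, hta⟩ := Option.isSome_iff_exists.mp (hInv.valid (p, q) hmem).1
  obtain ⟨tb, htb⟩ := Option.isSome_iff_exists.mp (hInv.valid (p, q) hmem).2
  have hvx : typeAt m (s,true) (x :: p) = childT m x ta := by
    simp only [typeAt, hta, Option.bind_some]
  obtain ⟨tc, htc⟩ := Option.isSome_iff_exists.mp (hvx ▸ hv)
  obtain ⟨y, tcy, hcy, hfresh, hTC, hcons⟩ := choose_y hInv hmem hta htb htc hnew hlen
  exact ⟨y, extend_assemble hInv hmem hta htb htc hcy hnew hfresh hTC hcons⟩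

/-- One-step extension, Spoiler on side 2. -/
lemma extendOne_false {s m : ℕ} {L : List (List (Fin (m+1)) × List (Fin (m+1)))}
    {sw : ℕ} {p q : List (Fin (m+1))} {y : Fin (m+1)}
    (hInv : DupInv s m L sw (some false))
    (hmem : (p, q) ∈ L)
    (hv : (typeAt m (s,false) (y :: q)).isSome)
    (hnew : ∀ ab ∈ L, ab.2 ≠ y :: q)
    (hlen : L.length < m) :
    ∃ x, DupInv s m ((x :: p, y :: q) :: L) sw (some false) := by
  obtain ⟨ta, hta⟩ := Option.isSome_iff_exists.mp (hInv.valid (p, q) hmem).1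
  obtain ⟨tb, htb⟩ := Option.isSome_iff_exists.mp (hInv.valid (p, q) hmem).2
  have hvy : typeAt m (s,false) (y :: q) = childT m y tb := by
    simp only [typeAt, htb, Option.bind_some]
  obtain ⟨tcy, hcy⟩ := Option.isSome_iff_exists.mp (hvy ▸ hv)
  obtain ⟨x, tc, htc, hfresh, hTC, hcons⟩ := choose_x hInv hmem hta htb hcy hnew hlen
  exact ⟨x, extend_assemble hInv hmem hta htb htc hcy hfresh hnew hTC hcons⟩

/-- Chain extension, Spoiler on side 1: match a whole path. -/
lemma extendChain_true {s m : ℕ} (p : List (Fin (m+1)))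
    (hvp : (typeAt m (s,true) p).isSome) :
    ∀ L : List (List (Fin (m+1)) × List (Fin (m+1))), ∀ sw : ℕ,
    DupInv s m L sw (some true) → L.length + p.length < m →
    ∃ L' q, (∀ ab ∈ L, ab ∈ L') ∧ (p, q) ∈ L' ∧ DupInv s m L' sw (some true) ∧
      L'.length ≤ L.length + p.length + 1 := by
  induction p with
  | nil =>
    intro L sw hInv _
    exact ⟨L, [], fun ab h => h, hInv.root_mem, hInv, by omega⟩
  | cons x p' ih =>
    intro L sw hInv hlen
    obtain ⟨L₁, q', hsub₁, hmem₁, hInv₁, hlen₁⟩ :=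
      ih (typeAt_cons_isSome hvp) L sw hInv (by simp at hlen ⊢; omega)
    by_cases hx : ∃ w, (x :: p', w) ∈ L₁
    · obtain ⟨w, hw⟩ := hx
      exact ⟨L₁, w, hsub₁, hw, hInv₁, by simp at hlen ⊢; omega⟩
    · push_neg at hx
      have hnew : ∀ ab ∈ L₁, ab.1 ≠ x :: p' := by
        intro ab hab heq
        exact hx ab.2 (by rw [← heq]; exact hab)
      obtain ⟨y, hInv'⟩ := extendOne_true hInv₁ hmem₁ hvp hnew
        (by simp at hlen; omega)
      exact ⟨(x :: p', y :: q') :: L₁, y :: q',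
        fun ab h => List.mem_cons_of_mem _ (hsub₁ ab h),
        List.mem_cons_self, hInv', by simp at hlen ⊢; omega⟩

/-- Chain extension, Spoiler on side 2. -/
lemma extendChain_false {s m : ℕ} (q : List (Fin (m+1)))
    (hvq : (typeAt m (s,false) q).isSome) :
    ∀ L : List (List (Fin (m+1)) × List (Fin (m+1))), ∀ sw : ℕ,
    DupInv s m L sw (some false) → L.length + q.length < m →
    ∃ L' p, (∀ ab ∈ L, ab ∈ L') ∧ (p, q) ∈ L' ∧ DupInv s m L' sw (some false) ∧
      L'.length ≤ L.length + q.length + 1 := by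
  induction q with
  | nil =>
    intro L sw hInv _
    exact ⟨L, [], fun ab h => h, hInv.root_mem, hInv, by omega⟩
  | cons y q' ih =>
    intro L sw hInv hlen
    obtain ⟨L₁, p', hsub₁, hmem₁, hInv₁, hlen₁⟩ :=
      ih (typeAt_cons_isSome hvq) L sw hInv (by simp at hlen ⊢; omega)
    by_cases hy : ∃ w, (w, y :: q') ∈ L₁
    · obtain ⟨w, hw⟩ := hy
      exact ⟨L₁, w, hsub₁, hw, hInv₁, by simp at hlen ⊢; omega⟩
    · push_neg at hy
      have hnew : ∀ ab ∈ L₁, ab.2 ≠ y :: q' := by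
        intro ab hab heq
        exact hy ab.1 (by rw [← heq]; exact hab)
      obtain ⟨x, hInv'⟩ := extendOne_false hInv₁ hmem₁ hvq hnew
        (by simp at hlen; omega)
      exact ⟨(x :: p', y :: q') :: L₁, x :: p',
        fun ab h => List.mem_cons_of_mem _ (hsub₁ ab h),
        List.mem_cons_self, hInv', by simp at hlen ⊢; omega⟩

/-! ## From the invariant to GoodPairs; the game state -/

lemma goodPairs_of_inv {s m sw : ℕ} {last : Option Bool}
    {L : List (List (Fin (m+1)) × List (Fin (m+1)))}
    (hInv : DupInv s m L sw last)
    (ps : List ((PathTree m (s,true)).V × (PathTree m (s,false)).V))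
    (hps : ∀ pr ∈ ps, (pr.1.1, pr.2.1) ∈ L) :
    GoodPairs (PathTree m (s,true)) (PathTree m (s,false)) ps := by
  intro pr hpr qr hqr
  have h1 := hps pr hpr
  have h2 := hps qr hqr
  constructor
  · constructor
    · intro hpar
      obtain ⟨x, hx⟩ := (pathTree_parent_eq_some pr.1 qr.1).1 hpar
      obtain ⟨y, u, hyu, hmem⟩ := hInv.closure _ h1 x qr.1.1 hx
      have : u = qr.2.1 := by
        have := (hInv.bij (qr.1.1, u) hmem (qr.1.1, qr.2.1) h2).mp rfl
        simpa using this
      exact (pathTree_parent_eq_some pr.2 qr.2).2 ⟨y, by simpa [this] using hyu⟩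
    · intro hpar
      obtain ⟨y, hy⟩ := (pathTree_parent_eq_some pr.2 qr.2).1 hpar
      obtain ⟨x, u, hxu, hmem⟩ := hInv.closure2 _ h1 y qr.2.1 hy
      have : u = qr.1.1 := by
        have := (hInv.bij (u, qr.2.1) hmem (qr.1.1, qr.2.1) h2).mpr rfl
        simpa using this
      exact (pathTree_parent_eq_some pr.1 qr.1).2 ⟨x, by simpa [this] using hxu⟩
  · rw [show pr.1 = qr.1 ↔ pr.1.1 = qr.1.1 from Subtype.ext_iff, show pr.2 = qr.2 ↔ pr.2.1 = qr.2.1 from Subtype.ext_iff]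
    exact hInv.bij _ h1 _ h2

/-- weight used to bound path lengths. -/
def w2 (t : NT) : ℕ := 2 * t.1 + (if t.2 then 0 else 1)

lemma childT_w2 {m : ℕ} {x : Fin (m+1)} {t t' : NT} (h : childT m x t = some t') :
    w2 t' + 1 ≤ w2 t := by
  rcases t with ⟨j, b⟩
  cases j with
  | zero =>
    cases b with
    | true => simp [childT] at h
    | false =>
      rw [show t' = (0, true) from (Option.some_inj.mp h).symm]
      simp [w2]
  | succ j =>
    cases b with
    | true =>
      rw [show t' = (j, false) from (Option.some_inj.mp h).symm]
      simp [w2]; omega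
    | false =>
      simp only [childT] at h
      split at h <;> rw [← Option.some_inj.mp h] <;> simp [w2] <;> omega

lemma typeAt_length {m : ℕ} {σ : NT} {p : List (Fin (m+1))} {t : NT}
    (h : typeAt m σ p = some t) : p.length + w2 t ≤ w2 σ := by
  induction p generalizing t with
  | nil =>
    rw [show t = σ from (Option.some_inj.mp h).symm]
    simp
  | cons x p ih =>
    simp only [typeAt] at h
    rcases ht' : typeAt m σ p with _ | t'
    · rw [ht'] at h; simp at h
    · rw [ht'] at h
      simp only [Option.bind_some] at h
      have := ih ht'
      have := childT_w2 h
      simp only [List.length_cons]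
      omega

lemma valid_length_bound1 {s m : ℕ} (p : List (Fin (m+1)))
    (h : (typeAt m (s,true) p).isSome) : p.length ≤ 2 * s := by
  obtain ⟨t, ht⟩ := Option.isSome_iff_exists.mp h
  have h2 := typeAt_length ht
  rcases t with ⟨j, b⟩
  cases b <;> simp [w2] at h2 <;> omega

lemma valid_length_bound2 {s m : ℕ} (p : List (Fin (m+1)))
    (h : (typeAt m (s,false) p).isSome) : p.length ≤ 2 * s + 1 := by
  obtain ⟨t, ht⟩ := Option.isSome_iff_exists.mp h
  have h2 := typeAt_length ht
  rcases t with ⟨j, b⟩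
  cases b <;> simp [w2] at h2 <;> omega

/-- The game-state predicate used as Duplicator's winning invariant. -/
def IState (s m : ℕ) (r sw : ℕ) (last : Option Bool)
    (ps : List ((PathTree m (s,true)).V × (PathTree m (s,false)).V)) : Prop :=
  ∃ L, DupInv s m L sw last ∧ (∀ pr ∈ ps, (pr.1.1, pr.2.1) ∈ L) ∧
    L.length + r * (2*s + 2) < m

lemma istate_good {s m r sw last ps} (h : IState s m r sw last ps) :
    GoodPairs (PathTree m (s,true)) (PathTree m (s,false)) ps := by
  obtain ⟨L, hInv, hps, _⟩ := h
  exact goodPairs_of_inv hInv ps hps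

lemma istate_step1 {s m r sw last ps} (h : IState s m (r+1) sw last ps)
    (hc : switchCost last true ≤ sw) :
    ∀ x : (PathTree m (s,true)).V, ∃ y : (PathTree m (s,false)).V,
      IState s m r (sw - switchCost last true) (some true) ((x, y) :: ps) := by
  obtain ⟨L, hInv, hps, hcount⟩ := h
  intro x
  have hInv' := hInv.reAnchor true hc
  have hplen : x.1.length ≤ 2 * s := valid_length_bound1 x.1 x.2
  obtain ⟨L', q, hsub, hmem, hInv'', hlen'⟩ :=
    extendChain_true x.1 x.2 L (sw - switchCost last true) hInv' (by nlinarith)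
  have hqv : (typeAt m (s,false) q).isSome := (hInv''.valid _ hmem).2
  refine ⟨⟨q, hqv⟩, L', hInv'', ?_, ?_⟩
  · intro pr hpr
    rcases List.mem_cons.mp hpr with rfl | hpr
    · exact hmem
    · exact hsub _ (hps pr hpr)
  · have : L'.length ≤ L.length + 2*s + 1 := by omega
    nlinarith

lemma istate_step2 {s m r sw last ps} (h : IState s m (r+1) sw last ps)
    (hc : switchCost last false ≤ sw) :
    ∀ y : (PathTree m (s,false)).V, ∃ x : (PathTree m (s,true)).V,
      IState s m r (sw - switchCost last false) (some false) ((x, y) :: ps) := by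
  obtain ⟨L, hInv, hps, hcount⟩ := h
  intro y
  have hInv' := hInv.reAnchor false hc
  have hplen : y.1.length ≤ 2 * s + 1 := valid_length_bound2 y.1 y.2
  obtain ⟨L', p, hsub, hmem, hInv'', hlen'⟩ :=
    extendChain_false y.1 y.2 L (sw - switchCost last false) hInv' (by nlinarith)
  have hpv : (typeAt m (s,true) p).isSome := (hInv''.valid _ hmem).1
  refine ⟨⟨p, hpv⟩, L', hInv'', ?_, ?_⟩
  · intro pr hpr
    rcases List.mem_cons.mp hpr with rfl | hpr
    · exact hmem
    · exact hsub _ (hps pr hpr)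
  · have : L'.length ≤ L.length + 2*s + 2 := by omega
    nlinarith

lemma istate_init (s m r : ℕ) (hs : 1 ≤ s) (hm : 1 + r * (2*s+2) < m) :
    IState s m r (s - 1) none [((PathTree m (s,true)).root, (PathTree m (s,false)).root)] := by
  refine ⟨[([], [])], ?_, ?_, by simpa using hm⟩
  · refine ⟨List.mem_singleton_self _, ?_, ?_, ?_, ?_, ?_, ?_⟩
    · rintro ab hab
      rw [List.mem_singleton.mp hab]
      exact ⟨by simp [typeAt], by simp [typeAt]⟩
    · rintro ab hab
      rw [List.mem_singleton.mp hab]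
    · rintro ab hab cd hcd
      rw [List.mem_singleton.mp hab, List.mem_singleton.mp hcd]
    · rintro ab hab x p hx
      rw [List.mem_singleton.mp hab] at hx
      simp at hx
    · rintro ab hab ta tb h1 h2
      rw [List.mem_singleton.mp hab] at h1 h2
      simp only [typeAt, Option.some_inj] at h1 h2
      rw [← h1, ← h2]
      refine Or.inr (Or.inl ⟨rfl, rfl, rfl, ?_⟩)
      simp only [switchCost]
      omega
    · rintro x p y q hmem1 hmem2
      rw [List.mem_singleton] at hmem1
      exact absurd (congrArg Prod.fst hmem1) (by simp)
  · intro pr hpr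
    rw [List.mem_singleton.mp hpr]
    exact List.mem_singleton_self _

/-! ## The transfer lemma -/

def kmap (d : Bool) : Option Bool → Option QKind
  | none => none
  | some b => some (if b = d then QKind.ex else QKind.all)

lemma kmap_cost_all (pol d : Bool) (last : Option Bool) :
    (if kmap d last = some (if pol then QKind.ex else QKind.all) then 1 else 0) =
      switchCost last (if pol = d then false else true) ∧
    kmap d (some (if pol = d then false else true)) =
      some (if pol then QKind.all else QKind.ex) := by
  cases pol <;> cases d <;> rcases last with _ | b <;>
    first
      | (constructor <;> rfl)
      | (cases b <;> constructor <;> rfl)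

lemma kmap_cost_ex (pol d : Bool) (last : Option Bool) :
    (if kmap d last = some (if pol then QKind.all else QKind.ex) then 1 else 0) =
      switchCost last (if pol = d then true else false) ∧
    kmap d (some (if pol = d then true else false)) =
      some (if pol then QKind.ex else QKind.all) := by
  cases pol <;> cases d <;> rcases last with _ | b <;>
    first
      | (constructor <;> rfl)
      | (cases b <;> constructor <;> rfl)

lemma bool_not_ne {pol d : Bool} (h : pol = d) : ¬(!pol) = d := by
  cases pol <;> cases d <;> simp_all

lemma bool_not_eq {pol d : Bool} (h : ¬ pol = d) : (!pol) = d := by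
  cases pol <;> cases d <;> simp_all

lemma term_pair {T1 T2 : RTree} {ps : List (T1.V × T2.V)} {k : ℕ}
    (hroot : (T1.root, T2.root) ∈ ps) {η1 : ℕ → T1.V} {η2 : ℕ → T2.V}
    (henv : ∀ n, n < k → (η1 n, η2 n) ∈ ps) (t : FOTerm) (ht : t.freeBound ≤ k) :
    (t.eval T1 η1, t.eval T2 η2) ∈ ps := by
  cases t with
  | var n => exact henv n (by simpa [FOTerm.freeBound] using ht)
  | root => exact hroot

theorem transfer {T1 T2 : RTree}
    (I : ℕ → ℕ → Option Bool → List (T1.V × T2.V) → Prop)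
    (hgood : ∀ r sw last ps, I r sw last ps → GoodPairs T1 T2 ps)
    (hstep1 : ∀ r sw last ps, I (r+1) sw last ps → switchCost last true ≤ sw →
      ∀ x : T1.V, ∃ y : T2.V, I r (sw - switchCost last true) (some true) ((x, y) :: ps))
    (hstep2 : ∀ r sw last ps, I (r+1) sw last ps → switchCost last false ≤ sw →
      ∀ y : T2.V, ∃ x : T1.V, I r (sw - switchCost last false) (some false) ((x, y) :: ps)) :
    ∀ (φ : FOFormula) (pol d : Bool) (r sw : ℕ) (last : Option Bool)
      (ps : List (T1.V × T2.V)) (η1 : ℕ → T1.V) (η2 : ℕ → T2.V),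
      I r sw last ps → (T1.root, T2.root) ∈ ps →
      (∀ n, n < φ.freeBound → (η1 n, η2 n) ∈ ps) →
      φ.qd ≤ r → φ.aqdAux pol (kmap d last) ≤ sw →
      ((pol = d → (φ.Sat T1 η1 → φ.Sat T2 η2)) ∧
       (pol ≠ d → (φ.Sat T2 η2 → φ.Sat T1 η1))) := by
  intro φ
  induction φ with
  | eq t₁ t₂ =>
    intro pol d r sw last ps η1 η2 hI hroot henv _ _
    have h1 := term_pair hroot henv t₁ (le_max_left _ _)
    have h2 := term_pair hroot henv t₂ (le_max_right _ _)
    have hg := (hgood r sw last ps hI _ h1 _ h2).2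
    simp only [FOFormula.Sat]
    exact ⟨fun _ => hg.mp, fun _ => hg.mpr⟩
  | parentOf t₁ t₂ =>
    intro pol d r sw last ps η1 η2 hI hroot henv _ _
    have h1 := term_pair hroot henv t₂ (le_max_right _ _)
    have h2 := term_pair hroot henv t₁ (le_max_left _ _)
    have hg := (hgood r sw last ps hI _ h1 _ h2).1
    simp only [FOFormula.Sat]
    exact ⟨fun _ => hg.mp, fun _ => hg.mpr⟩
  | not φ ih =>
    intro pol d r sw last ps η1 η2 hI hroot henv hqd haqd
    simp only [FOFormula.qd] at hqd
    simp only [FOFormula.aqdAux] at haqd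
    have ih' := ih (!pol) d r sw last ps η1 η2 hI hroot henv hqd haqd
    simp only [FOFormula.Sat]
    constructor
    · intro hpd hA hB
      exact hA (ih'.2 (bool_not_ne hpd) hB)
    · intro hpd hB hA
      exact hB (ih'.1 (bool_not_eq hpd) hA)
  | and φ ψ ihφ ihψ =>
    intro pol d r sw last ps η1 η2 hI hroot henv hqd haqd
    simp only [FOFormula.qd, max_le_iff] at hqd
    simp only [FOFormula.aqdAux, max_le_iff] at haqd
    simp only [FOFormula.freeBound] at henv
    have ih1 := ihφ pol d r sw last ps η1 η2 hI hroot
      (fun n hn => henv n (lt_of_lt_of_le hn (le_max_left _ _))) hqd.1 haqd.1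
    have ih2 := ihψ pol d r sw last ps η1 η2 hI hroot
      (fun n hn => henv n (lt_of_lt_of_le hn (le_max_right _ _))) hqd.2 haqd.2
    simp only [FOFormula.Sat]
    exact ⟨fun hpd h => ⟨ih1.1 hpd h.1, ih2.1 hpd h.2⟩,
      fun hpd h => ⟨ih1.2 hpd h.1, ih2.2 hpd h.2⟩⟩
  | or φ ψ ihφ ihψ =>
    intro pol d r sw last ps η1 η2 hI hroot henv hqd haqd
    simp only [FOFormula.qd, max_le_iff] at hqd
    simp only [FOFormula.aqdAux, max_le_iff] at haqd
    simp only [FOFormula.freeBound] at henv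
    have ih1 := ihφ pol d r sw last ps η1 η2 hI hroot
      (fun n hn => henv n (lt_of_lt_of_le hn (le_max_left _ _))) hqd.1 haqd.1
    have ih2 := ihψ pol d r sw last ps η1 η2 hI hroot
      (fun n hn => henv n (lt_of_lt_of_le hn (le_max_right _ _))) hqd.2 haqd.2
    simp only [FOFormula.Sat]
    exact ⟨fun hpd h => h.elim (fun h => Or.inl (ih1.1 hpd h)) (fun h => Or.inr (ih2.1 hpd h)),
      fun hpd h => h.elim (fun h => Or.inl (ih1.2 hpd h)) (fun h => Or.inr (ih2.2 hpd h))⟩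
  | imp φ ψ ihφ ihψ =>
    intro pol d r sw last ps η1 η2 hI hroot henv hqd haqd
    simp only [FOFormula.qd, max_le_iff] at hqd
    simp only [FOFormula.aqdAux, max_le_iff] at haqd
    simp only [FOFormula.freeBound] at henv
    have ih1 := ihφ (!pol) d r sw last ps η1 η2 hI hroot
      (fun n hn => henv n (lt_of_lt_of_le hn (le_max_left _ _))) hqd.1 haqd.1
    have ih2 := ihψ pol d r sw last ps η1 η2 hI hroot
      (fun n hn => henv n (lt_of_lt_of_le hn (le_max_right _ _))) hqd.2 haqd.2
    simp only [FOFormula.Sat]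
    constructor
    · intro hpd hA hB1
      exact ih2.1 hpd (hA (ih1.2 (bool_not_ne hpd) hB1))
    · intro hpd hB hA1
      exact ih2.2 hpd (hB (ih1.1 (bool_not_eq hpd) hA1))
  | all φ ih =>
    intro pol d r sw last ps η1 η2 hI hroot henv hqd haqd
    cases r with
    | zero => simp [FOFormula.qd] at hqd
    | succ r =>
    simp only [FOFormula.qd, Nat.succ_le_succ_iff] at hqd
    simp only [FOFormula.aqdAux] at haqd
    have hkc := kmap_cost_all pol d last
    constructor
    · intro hpd
      rw [if_pos hpd] at hkc
      rw [hkc.1] at haqd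
      intro hA
      show ∀ w : T2.V, _
      intro w
      obtain ⟨x, hI'⟩ := hstep2 r sw last ps hI (by omega) w
      have ih' := ih pol d r (sw - switchCost last false) (some false) ((x, w) :: ps)
        (fun n => match n with | 0 => x | Nat.succ k => η1 k)
        (fun n => match n with | 0 => w | Nat.succ k => η2 k)
        hI' (List.mem_cons_of_mem _ hroot)
        (by
          intro n hn
          match n with
          | 0 => exact List.mem_cons_self
          | Nat.succ k =>
            refine List.mem_cons_of_mem _ (henv k ?_)
            simp only [FOFormula.freeBound]
            omega)
        hqd (by rw [hkc.2]; omega)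
      exact ih'.1 hpd (hA x)
    · intro hpd
      rw [if_neg hpd] at hkc
      rw [hkc.1] at haqd
      intro hB
      show ∀ w : T1.V, _
      intro w
      obtain ⟨y, hI'⟩ := hstep1 r sw last ps hI (by omega) w
      have ih' := ih pol d r (sw - switchCost last true) (some true) ((w, y) :: ps)
        (fun n => match n with | 0 => w | Nat.succ k => η1 k)
        (fun n => match n with | 0 => y | Nat.succ k => η2 k)
        hI' (List.mem_cons_of_mem _ hroot)
        (by
          intro n hn
          match n with
          | 0 => exact List.mem_cons_self
          | Nat.succ k =>
            refine List.mem_cons_of_mem _ (henv k ?_)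
            simp only [FOFormula.freeBound]
            omega)
        hqd (by rw [hkc.2]; omega)
      exact ih'.2 hpd (hB y)
  | ex φ ih =>
    intro pol d r sw last ps η1 η2 hI hroot henv hqd haqd
    cases r with
    | zero => simp [FOFormula.qd] at hqd
    | succ r =>
    simp only [FOFormula.qd, Nat.succ_le_succ_iff] at hqd
    simp only [FOFormula.aqdAux] at haqd
    have hkc := kmap_cost_ex pol d last
    constructor
    · intro hpd
      rw [if_pos hpd] at hkc
      rw [hkc.1] at haqd
      rintro ⟨x, hx⟩
      obtain ⟨y, hI'⟩ := hstep1 r sw last ps hI (by omega) x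
      have ih' := ih pol d r (sw - switchCost last true) (some true) ((x, y) :: ps)
        (fun n => match n with | 0 => x | Nat.succ k => η1 k)
        (fun n => match n with | 0 => y | Nat.succ k => η2 k)
        hI' (List.mem_cons_of_mem _ hroot)
        (by
          intro n hn
          match n with
          | 0 => exact List.mem_cons_self
          | Nat.succ k =>
            refine List.mem_cons_of_mem _ (henv k ?_)
            simp only [FOFormula.freeBound]
            omega)
        hqd (by rw [hkc.2]; omega)
      exact ⟨y, ih'.1 hpd hx⟩
    · intro hpd
      rw [if_neg hpd] at hkc
      rw [hkc.1] at haqd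
      rintro ⟨y, hy⟩
      obtain ⟨x, hI'⟩ := hstep2 r sw last ps hI (by omega) y
      have ih' := ih pol d r (sw - switchCost last false) (some false) ((x, y) :: ps)
        (fun n => match n with | 0 => x | Nat.succ k => η1 k)
        (fun n => match n with | 0 => y | Nat.succ k => η2 k)
        hI' (List.mem_cons_of_mem _ hroot)
        (by
          intro n hn
          match n with
          | 0 => exact List.mem_cons_self
          | Nat.succ k =>
            refine List.mem_cons_of_mem _ (henv k ?_)
            simp only [FOFormula.freeBound]
            omega)
        hqd (by rw [hkc.2]; omega)
      exact ⟨x, ih'.2 hpd hy⟩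

/-! ## Conclusion -/

theorem kein_aqd_exact' (s : ℕ) :
    (∃ B : FOFormula, B.IsSentence ∧ B.aqd ≤ s ∧
        ∀ T : RTree, T.IsTree → (Models T B ↔ Models T (KEIN s))) ∧
    (∀ B : FOFormula, B.IsSentence →
        (∀ T : RTree, T.IsTree → (Models T B ↔ Models T (KEIN s))) → s ≤ B.aqd) := by
  constructor
  · exact ⟨KEIN s, kein_isSentence s, kein_aqd_le s, fun T _ => Iff.rfl⟩
  · intro B hsent hequiv
    by_contra hlt
    push_neg at hlt
    have hs : 1 ≤ s := by omega
    set r := B.qd with hr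
    set m := r * (2*s+2) + 2 with hm
    have hm1 : 1 ≤ m := by omega
    have hinit := istate_init s m r hs (by omega)
    have htr := transfer (T1 := PathTree m (s,true)) (T2 := PathTree m (s,false))
      (IState s m)
      (fun r sw last ps h => istate_good h)
      (fun r sw last ps h hc => istate_step1 h hc)
      (fun r sw last ps h hc => istate_step2 h hc)
      B true true r (s-1) none
      [((PathTree m (s,true)).root, (PathTree m (s,false)).root)]
      (fun _ => (PathTree m (s,true)).root) (fun _ => (PathTree m (s,false)).root)
      hinit (List.mem_singleton_self _)
      (by
        intro n hn
        rw [hsent] at hn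
        omega)
      le_rfl
      (by
        show B.aqdAux true (kmap true none) ≤ s - 1
        have : kmap true none = none := rfl
        rw [this]
        show B.aqd ≤ s - 1
        omega)
    have hT1 : Models (PathTree m (s,true)) (KEIN s) := models_kein_true s m hm1
    have hB1 : Models (PathTree m (s,true)) B :=
      (hequiv _ (pathTree_isTree m (s,true))).2 hT1
    have hB2 : Models (PathTree m (s,false)) B := htr.1 rfl hB1
    have hK2 : Models (PathTree m (s,false)) (KEIN s) :=
      (hequiv _ (pathTree_isTree m (s,false))).1 hB2
    exact not_models_kein_false s m hm1 hK2


/-- For every non-negative integer `s`, the alternating quantifier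
depth of `KEIN_s` on rooted, locally finite trees is exactly `s`: it is
expressible by a sentence with at most `s` alternations, but every sentence
expressing it has at least `s` alternations. -/
theorem kein_aqd_exact (s : ℕ) :
    (∃ B : FOFormula, B.IsSentence ∧ B.aqd ≤ s ∧
        ∀ T : RTree, T.IsTree → (Models T B ↔ Models T (KEIN s))) ∧
    (∀ B : FOFormula, B.IsSentence →
        (∀ T : RTree, T.IsTree → (Models T B ↔ Models T (KEIN s))) → s ≤ B.aqd) := by
  exact kein_aqd_exact' s
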